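/- arXiv:1811.02242 — 5 statements merged into one kernel-verified Lean document; each statement's English description precedes it below -/
import Mathlib

section
/- Let K = Σ_i c_i |f(i)⟩⟨i| be an incoherent Kraus operator on ℂ^d, where f : {0,…,d−1} → {0,…,d−1} and c_i ∈ ℂ. Then for every nonzero vector |ψ⟩ ∈ ℂ^d with K|ψ⟩ ≠ 0, the coherence rank does not increase: R_C(K|ψ⟩) ≤ R_C(|ψ⟩). -/
open scoped BigOperators ComplexOrder Matrix

open Classical in
/-- Coherence rank: number of nonzero coordinates in the fixed basis. -/
noncomputable def cohRank {ι : Type*} [Fintype ι] (ψ : ι → ℂ) : ℕ :=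
  (Finset.univ.filter fun i => ψ i ≠ 0).card

/-- Logarithmic coherence rank. -/
noncomputable def logCohRank {ι : Type*} [Fintype ι] (ψ : ι → ℂ) : ℝ :=
  Real.logb 2 (cohRank ψ)

/-- A density matrix: positive semidefinite with trace one. -/
def IsDensity {ι : Type*} [Fintype ι] (ρ : Matrix ι ι ℂ) : Prop :=
  ρ.PosSemidef ∧ ρ.trace = 1

/-- A pure-state decomposition ρ = ∑ pᵢ |ψᵢ⟩⟨ψᵢ| with pᵢ > 0, ∑ pᵢ = 1 and ψᵢ unit vectors. -/
def IsDecomp {ι : Type*} [Fintype ι] (ρ : Matrix ι ι ℂ) {n : ℕ}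
    (p : Fin n → ℝ) (ψ : Fin n → ι → ℂ) : Prop :=
  (∀ i, 0 < p i) ∧ (∑ i, p i = 1) ∧ (∀ i, ∑ x, ‖ψ i x‖ ^ 2 = 1) ∧
    ρ = ∑ i, (p i : ℂ) • Matrix.vecMulVec (ψ i) (star (ψ i))

/-- Logarithmic coherence number via the convex roof construction. -/
noncomputable def logCohNum {ι : Type*} [Fintype ι] (ρ : Matrix ι ι ℂ) : ℝ :=
  sInf { x | ∃ (n : ℕ) (p : Fin n → ℝ) (ψ : Fin n → ι → ℂ),
    IsDecomp ρ p ψ ∧ x = ∑ i, p i * logCohRank (ψ i) }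

/-- Logarithm of the Schmidt rank of a bipartite vector (rank of its coefficient matrix). -/
noncomputable def logSchmidtRank {ι κ : Type*} [Fintype ι] [Fintype κ]
    (ψ : ι × κ → ℂ) : ℝ :=
  Real.logb 2 ((Matrix.of fun i j => ψ (i, j)).rank)

/-- Logarithmic Schmidt number via the convex roof construction. -/
noncomputable def logSchmidtNum {ι κ : Type*} [Fintype ι] [Fintype κ]
    (ρ : Matrix (ι × κ) (ι × κ) ℂ) : ℝ :=
  sInf { x | ∃ (n : ℕ) (p : Fin n → ℝ) (ψ : Fin n → ι × κ → ℂ),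
    IsDecomp ρ p ψ ∧ x = ∑ i, p i * logSchmidtRank (ψ i) }

/-- An incoherent Kraus operator maps diagonal matrices to diagonal matrices under δ ↦ KδK†. -/
def IsIncoherentKraus {ι : Type*} [Fintype ι] (K : Matrix ι ι ℂ) : Prop :=
  ∀ δ : Matrix ι ι ℂ, δ.IsDiag → (K * δ * Kᴴ).IsDiag

/-- an incoherent Kraus operator K = ∑ᵢ cᵢ|f(i)⟩⟨i| does not increase
the coherence rank: R_C(Kψ) ≤ R_C(ψ) whenever ψ ≠ 0 and Kψ ≠ 0. -/
theorem coherence_rank_incoherent_kraus {d : ℕ} (f : Fin d → Fin d) (c : Fin d → ℂ)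
    (K : Matrix (Fin d) (Fin d) ℂ)
    (hK : K = Matrix.of fun j i => if j = f i then c i else 0)
    (ψ : Fin d → ℂ) (hψ : ψ ≠ 0) (hKψ : K.mulVec ψ ≠ 0) :
    cohRank (K.mulVec ψ) ≤ cohRank ψ := by
  classical
  unfold cohRank
  have key : ∀ j, K.mulVec ψ j ≠ 0 → ∃ i, f i = j ∧ ψ i ≠ 0 := by
    intro j hj
    by_contra h
    push_neg at h
    apply hj
    simp only [hK, Matrix.mulVec, dotProduct, Matrix.of_apply]
    apply Finset.sum_eq_zero
    intro i _
    by_cases hfi : j = f i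
    · simp [h i hfi.symm]
    · simp [hfi]
  set S := Finset.univ.filter fun j => K.mulVec ψ j ≠ 0 with hS
  set T := Finset.univ.filter fun i => ψ i ≠ 0 with hT
  have hg : ∀ j ∈ S, ∃ i, f i = j ∧ ψ i ≠ 0 := by
    intro j hj
    exact key j (by simpa [hS] using hj)
  choose g hg1 hg2 using hg
  apply Finset.card_le_card_of_injOn (fun j => if h : j ∈ S then g j h else j)
  · intro j hj
    rw [Finset.mem_coe] at hj
    simp only [hj, dif_pos]
    simp [hT, hg2 j hj]
  · intro a ha b hb hab
    simp only [Finset.mem_coe] at ha hb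
    simp only [ha, hb, dif_pos] at hab
    rw [← hg1 a ha, ← hg1 b hb, hab]
end

section
/- The logarithmic coherence number is strongly monotone under selective incoherent operations: let ρ be a density matrix on ℂ^d and let {K_n} be a finite family of incoherent Kraus operators with Σ_n K_n†K_n = I. Set q_n = Tr(K_n ρ K_n†) and ρ_n = K_n ρ K_n†/q_n for those n with q_n > 0. Then Σ_n q_n L_C(ρ_n) ≤ L_C(ρ). -/
open scoped BigOperators ComplexOrder Matrix

open Matrix

lemma aux_KvvK {ι : Type*} [Fintype ι] (K : Matrix ι ι ℂ) (v : ι → ℂ) :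
    K * vecMulVec v (star v) * Kᴴ = vecMulVec (K *ᵥ v) (star (K *ᵥ v)) := by
  rw [vecMulVec_eq Unit, vecMulVec_eq Unit, replicateCol_mulVec, star_mulVec, replicateRow_vecMul]
  simp [Matrix.mul_assoc]

lemma aux_trace {ι : Type*} [Fintype ι] (v : ι → ℂ) :
    (vecMulVec v (star v)).trace = ((∑ x, ‖v x‖ ^ 2 : ℝ) : ℂ) := by
  simp only [Matrix.trace, Matrix.diag_apply, vecMulVec_apply, Pi.star_apply]
  push_cast
  refine Finset.sum_congr rfl fun i _ => ?_
  rw [RCLike.star_def, Complex.mul_conj, Complex.normSq_eq_norm_sq]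
  push_cast; ring

lemma aux_sum_sq_eq_zero {ι : Type*} [Fintype ι] {v : ι → ℂ}
    (h : ∑ x, ‖v x‖ ^ 2 = 0) : v = 0 := by
  funext x
  have := (Finset.sum_eq_zero_iff_of_nonneg (fun i _ => sq_nonneg ‖v i‖)).mp h x (Finset.mem_univ x)
  simpa using this

lemma aux_vecMulVec_smul (c : ℂ) {ι : Type*} [Fintype ι] (u : ι → ℂ) :
    vecMulVec (c • u) (star (c • u)) = (c * star c) • vecMulVec u (star u) := by
  ext i j
  simp only [vecMulVec_apply, Pi.smul_apply, Pi.star_apply, Matrix.smul_apply, smul_eq_mul,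
    star_mul', star_smul]
  ring

lemma aux_col {ι : Type*} [Fintype ι] [DecidableEq ι] {K : Matrix ι ι ℂ}
    (hK : IsIncoherentKraus K) (i : ι) {j j' : ι} (hj : K j i ≠ 0) (hj' : K j' i ≠ 0) :
    j = j' := by
  by_contra hne
  have hd := hK (diagonal (fun k => if k = i then 1 else 0)) (isDiag_diagonal _)
  have h0 : (K * (diagonal fun k => if k = i then (1:ℂ) else 0) * Kᴴ) j j' = 0 := hd hne
  rw [Matrix.mul_apply] at h0
  simp only [Matrix.mul_diagonal, conjTranspose_apply, mul_ite, mul_one, mul_zero,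
    ite_mul, zero_mul] at h0
  rw [Finset.sum_ite_eq' Finset.univ i] at h0
  simp only [Finset.mem_univ, if_true] at h0
  rcases mul_eq_zero.mp h0 with h | h
  · exact hj h
  · exact hj' (by simpa using h)

lemma cohRank_pos {ι : Type*} [Fintype ι] {v : ι → ℂ} (hv : v ≠ 0) :
    0 < cohRank v := by
  classical
  obtain ⟨x, hx⟩ : ∃ x, v x ≠ 0 := by
    by_contra h; push_neg at h; exact hv (funext h)
  rw [cohRank, Finset.card_pos]
  exact ⟨x, by simp [hx]⟩

lemma logCohRank_nonneg {ι : Type*} [Fintype ι] {v : ι → ℂ} (hv : v ≠ 0) :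
    0 ≤ logCohRank v :=
  Real.logb_nonneg one_lt_two (by exact_mod_cast cohRank_pos hv)

lemma cohRank_smul {ι : Type*} [Fintype ι] {c : ℂ} (hc : c ≠ 0) (v : ι → ℂ) :
    cohRank (c • v) = cohRank v := by
  unfold cohRank
  congr 1
  refine Finset.filter_congr fun x _ => ?_
  simp [hc]

lemma logCohRank_smul {ι : Type*} [Fintype ι] {c : ℂ} (hc : c ≠ 0) (v : ι → ℂ) :
    logCohRank (c • v) = logCohRank v := by
  rw [logCohRank, logCohRank, cohRank_smul hc]

lemma cohRank_mulVec_le {ι : Type*} [Fintype ι] [DecidableEq ι] {K : Matrix ι ι ℂ}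
    (hK : IsIncoherentKraus K) (v : ι → ℂ) :
    cohRank (K *ᵥ v) ≤ cohRank v := by
  classical
  set f : ι → ι := fun i => if h : ∃ j, K j i ≠ 0 then h.choose else i with hf
  have hsub : (Finset.univ.filter fun j => (K *ᵥ v) j ≠ 0)
      ⊆ (Finset.univ.filter fun i => v i ≠ 0).image f := by
    intro j hj
    rw [Finset.mem_filter] at hj
    obtain ⟨i, hi⟩ : ∃ i, K j i * v i ≠ 0 := by
      by_contra h; push_neg at h
      exact hj.2 (by rw [Matrix.mulVec, dotProduct]; exact Finset.sum_eq_zero fun i _ => h i)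
    have hKji : K j i ≠ 0 := left_ne_zero_of_mul hi
    have hvi : v i ≠ 0 := right_ne_zero_of_mul hi
    have hex : ∃ j, K j i ≠ 0 := ⟨j, hKji⟩
    have hfi : f i = j := by
      rw [hf]; simp only [dif_pos hex]
      exact aux_col hK i hex.choose_spec hKji
    exact Finset.mem_image.mpr ⟨i, by simp [hvi], hfi⟩
  calc cohRank (K *ᵥ v) ≤ ((Finset.univ.filter fun i => v i ≠ 0).image f).card := by
        rw [cohRank]
        convert Finset.card_le_card hsub using 2
    _ ≤ cohRank v := by
        rw [cohRank]
        convert Finset.card_image_le using 3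

lemma unit_ne_zero {ι : Type*} [Fintype ι] {v : ι → ℂ} (hv : ∑ x, ‖v x‖ ^ 2 = 1) :
    v ≠ 0 := by
  intro h; rw [h] at hv; simp at hv

lemma decompSet_nonneg {ι : Type*} [Fintype ι] (ρ : Matrix ι ι ℂ) :
    ∀ x ∈ { x | ∃ (n : ℕ) (p : Fin n → ℝ) (ψ : Fin n → ι → ℂ),
      IsDecomp ρ p ψ ∧ x = ∑ i, p i * logCohRank (ψ i) }, 0 ≤ x := by
  rintro x ⟨n, p, ψ, ⟨hp, _, hu, _⟩, rfl⟩
  exact Finset.sum_nonneg fun i _ =>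
    mul_nonneg (hp i).le (logCohRank_nonneg (unit_ne_zero (hu i)))

lemma decompSet_bddBelow {ι : Type*} [Fintype ι] (ρ : Matrix ι ι ℂ) :
    BddBelow { x | ∃ (n : ℕ) (p : Fin n → ℝ) (ψ : Fin n → ι → ℂ),
      IsDecomp ρ p ψ ∧ x = ∑ i, p i * logCohRank (ψ i) } :=
  ⟨0, decompSet_nonneg ρ⟩

lemma key_sum {σ : Type*} [Fintype σ] (w : σ → ℝ) {M : Type*} [AddCommMonoid M]
    (f : σ → M) (hf : ∀ s, w s = 0 → f s = 0) :
    ∑ k : Fin (Fintype.card {s // w s ≠ 0}),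
      f (((Fintype.equivFin {s // w s ≠ 0}).symm k) : σ) = ∑ s, f s := by
  classical
  rw [Equiv.sum_comp (Fintype.equivFin {s // w s ≠ 0}).symm
    (fun t : {s // w s ≠ 0} => f t.1)]
  rw [← Finset.sum_subtype (Finset.univ.filter fun s => w s ≠ 0) (by simp) f]
  exact Finset.sum_filter_of_ne fun s _ h => fun h0 => h (hf s h0)

lemma mem_decompSet {ι : Type*} [Fintype ι] {σ : Type*} [Fintype σ] (ρ : Matrix ι ι ℂ)
    (w : σ → ℝ) (v : σ → ι → ℂ) (hw : ∀ s, 0 ≤ w s) (hsum : ∑ s, w s = 1)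
    (hunit : ∀ s, w s ≠ 0 → ∑ x, ‖v s x‖ ^ 2 = 1)
    (hρ : ρ = ∑ s, (w s : ℂ) • vecMulVec (v s) (star (v s))) :
    (∑ s, w s * logCohRank (v s)) ∈ { x | ∃ (n : ℕ) (p : Fin n → ℝ) (ψ : Fin n → ι → ℂ),
      IsDecomp ρ p ψ ∧ x = ∑ i, p i * logCohRank (ψ i) } := by
  classical
  set T := {s : σ // w s ≠ 0} with hT
  set e : Fin (Fintype.card T) ≃ T := (Fintype.equivFin T).symm with he
  refine ⟨Fintype.card T, fun k => w (e k).1, fun k => v (e k).1, ⟨?_, ?_, ?_, ?_⟩, ?_⟩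
  · intro k; exact lt_of_le_of_ne (hw _) (Ne.symm (e k).2)
  · have := key_sum w w (fun s h => h); simpa using this.trans hsum
  · intro k; exact hunit _ (e k).2
  · have := key_sum w (fun s => (w s : ℂ) • vecMulVec (v s) (star (v s))) (fun s h => by simp [h])
    rw [hρ]; simpa using this.symm
  · have := key_sum w (fun s => w s * logCohRank (v s)) (fun s h => by simp [h])
    simpa using this.symm

lemma exists_decomp {d : ℕ} (ρ : Matrix (Fin d) (Fin d) ℂ) (hρ : IsDensity ρ) :
    Set.Nonempty { x | ∃ (n : ℕ) (p : Fin n → ℝ) (ψ : Fin n → Fin d → ℂ),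
      IsDecomp ρ p ψ ∧ x = ∑ i, p i * logCohRank (ψ i) } := by
  classical
  have hH : ρ.IsHermitian := hρ.1.1
  set U : Matrix (Fin d) (Fin d) ℂ := (hH.eigenvectorUnitary : Matrix (Fin d) (Fin d) ℂ) with hU
  set lam : Fin d → ℝ := hH.eigenvalues with hlam
  have hdec : ρ = ∑ k, (lam k : ℂ) • vecMulVec (fun i => U i k) (star (fun i => U i k)) := by
    conv_lhs => rw [hH.spectral_theorem, Unitary.conjStarAlgAut_apply]
    ext i j
    rw [Matrix.mul_apply]
    simp only [Matrix.mul_diagonal, Matrix.sum_apply, Matrix.smul_apply, vecMulVec_apply,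
      Pi.star_apply, Matrix.star_apply, Function.comp, smul_eq_mul]
    exact Finset.sum_congr rfl fun k _ => by
      rw [hlam, hU, mul_assoc]; exact mul_left_comm (G := ℂ) _ _ _
  have hcolunit : ∀ k, ∑ i, ‖U i k‖ ^ 2 = 1 := by
    intro k
    have h1 : (star U * U) k k = 1 := by
      have : star U * U = 1 := Unitary.star_mul_self_of_mem hH.eigenvectorUnitary.2
      rw [this]; simp
    rw [Matrix.mul_apply] at h1
    have : ((∑ i, ‖U i k‖ ^ 2 : ℝ) : ℂ) = 1 := by
      rw [← h1]
      push_cast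
      refine Finset.sum_congr rfl fun i _ => ?_
      rw [Matrix.star_apply, RCLike.star_def, mul_comm, Complex.mul_conj,
        Complex.normSq_eq_norm_sq]
      push_cast; ring
    exact_mod_cast this
  have hlam1 : ∑ k, lam k = 1 := by
    have htr : ρ.trace = ((∑ k, lam k : ℝ) : ℂ) := by
      rw [hdec, Matrix.trace_sum]
      push_cast
      refine Finset.sum_congr rfl fun k _ => ?_
      rw [Matrix.trace_smul, aux_trace, hcolunit k, smul_eq_mul]
      push_cast; ring
    have := hρ.2
    rw [htr] at this
    exact_mod_cast this
  exact ⟨_, mem_decompSet ρ lam (fun k i => U i k) (fun k => hρ.1.eigenvalues_nonneg k)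
    hlam1 (fun k _ => hcolunit k) hdec⟩


/-- C3: strong monotonicity of the logarithmic coherence number under
selective incoherent operations: ∑ₙ qₙ L_C(ρₙ) ≤ L_C(ρ), where qₙ = Tr(KₙρKₙ†),
ρₙ = KₙρKₙ†/qₙ and the sum runs over those n with qₙ > 0. -/
theorem logCohNum_strong_monotone {d : ℕ} (ρ : Matrix (Fin d) (Fin d) ℂ)
    (hρ : IsDensity ρ) {m : ℕ} (K : Fin m → Matrix (Fin d) (Fin d) ℂ)
    (hinc : ∀ n, IsIncoherentKraus (K n))
    (htp : ∑ n, (K n)ᴴ * K n = 1) :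
    ∑ n ∈ Finset.univ.filter (fun n => 0 < (Matrix.trace (K n * ρ * (K n)ᴴ)).re),
        (Matrix.trace (K n * ρ * (K n)ᴴ)).re *
          logCohNum ((((Matrix.trace (K n * ρ * (K n)ᴴ)).re : ℂ))⁻¹ • (K n * ρ * (K n)ᴴ))
      ≤ logCohNum ρ := by
  classical
  rw [logCohNum]
  refine le_csInf (exists_decomp ρ hρ) ?_
  rintro x ⟨N, p, ψ, ⟨hp, hp1, hpsiunit, hdec⟩, rfl⟩
  set w : Fin m → Fin N → ℝ := fun n i => ∑ y, ‖((K n) *ᵥ (ψ i)) y‖ ^ 2 with hwdef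
  have hwnn : ∀ n i, 0 ≤ w n i := fun n i => Finset.sum_nonneg fun _ _ => sq_nonneg _
  have hmul0 : ∀ n i, w n i = 0 → (K n) *ᵥ ψ i = 0 := fun n i h => aux_sum_sq_eq_zero h
  have hKrho : ∀ n, K n * ρ * (K n)ᴴ
      = ∑ i, (p i : ℂ) • vecMulVec ((K n) *ᵥ ψ i) (star ((K n) *ᵥ ψ i)) := by
    intro n
    rw [hdec, Finset.mul_sum, Finset.sum_mul]
    refine Finset.sum_congr rfl fun i _ => ?_
    rw [mul_smul_comm, smul_mul_assoc, aux_KvvK]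
  have htr : ∀ n, (K n * ρ * (K n)ᴴ).trace = ((∑ i, p i * w n i : ℝ) : ℂ) := by
    intro n
    rw [hKrho n, Matrix.trace_sum]
    push_cast
    refine Finset.sum_congr rfl fun i _ => ?_
    rw [Matrix.trace_smul, aux_trace, smul_eq_mul, hwdef]
  have hq : ∀ n, ((K n * ρ * (K n)ᴴ).trace).re = ∑ i, p i * w n i := by
    intro n; rw [htr n]; exact Complex.ofReal_re _
  have hF2 : ∀ i, ∑ n, w n i = 1 := by
    intro i
    have h1 : ((∑ n, w n i : ℝ) : ℂ)
        = ∑ n, (K n * vecMulVec (ψ i) (star (ψ i)) * (K n)ᴴ).trace := by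
      push_cast
      refine Finset.sum_congr rfl fun n _ => ?_
      rw [aux_KvvK, aux_trace]
    have h2 : ∑ n, (K n * vecMulVec (ψ i) (star (ψ i)) * (K n)ᴴ).trace = 1 := by
      have hcyc : ∀ n, (K n * vecMulVec (ψ i) (star (ψ i)) * (K n)ᴴ).trace
          = ((K n)ᴴ * K n * vecMulVec (ψ i) (star (ψ i))).trace := fun n =>
        Matrix.trace_mul_cycle (K n) _ (K n)ᴴ
      rw [Finset.sum_congr rfl fun n _ => hcyc n, ← Matrix.trace_sum]
      rw [← Finset.sum_mul, htp, one_mul, aux_trace, hpsiunit i]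
      norm_num
    have h3 := h1.trans h2
    exact_mod_cast h3
  have hbound : ∀ n, 0 < ((K n * ρ * (K n)ᴴ).trace).re →
      ((K n * ρ * (K n)ᴴ).trace).re *
        logCohNum ((((((K n * ρ * (K n)ᴴ).trace).re : ℝ) : ℂ))⁻¹ • (K n * ρ * (K n)ᴴ))
      ≤ ∑ i, p i * w n i * logCohRank ((K n) *ᵥ ψ i) := by
    intro n hqn
    set q : ℝ := ((K n * ρ * (K n)ᴴ).trace).re with hqdef
    set v' : Fin N → Fin d → ℂ :=
      fun i => (((Real.sqrt (w n i))⁻¹ : ℝ) : ℂ) • ((K n) *ᵥ ψ i) with hv'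
    set w' : Fin N → ℝ := fun i => p i * w n i / q with hw'
    have hw'nn : ∀ i, 0 ≤ w' i := fun i =>
      div_nonneg (mul_nonneg (hp i).le (hwnn n i)) hqn.le
    have hw'sum : ∑ i, w' i = 1 := by
      rw [hw']
      simp only
      rw [← Finset.sum_div, ← hq n, ← hqdef, div_self hqn.ne']
    have hw'pos : ∀ i, w' i ≠ 0 → 0 < w n i := by
      intro i h
      rcases (hwnn n i).lt_or_eq with h' | h'
      · exact h'
      · exact absurd (by rw [hw']; simp [← h']) h
    have hv'unit : ∀ i, w' i ≠ 0 → ∑ x, ‖v' i x‖ ^ 2 = 1 := by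
      intro i h
      have hwpos := hw'pos i h
      rw [hv']
      simp only [Pi.smul_apply, norm_smul, mul_pow, Complex.norm_real, Real.norm_eq_abs]
      rw [← Finset.mul_sum]
      have hww : ∑ y, ‖((K n) *ᵥ ψ i) y‖ ^ 2 = w n i := rfl
      rw [hww, sq_abs, inv_pow, Real.sq_sqrt (hwnn n i), inv_mul_cancel₀ hwpos.ne']
    have hρn : ((q : ℝ) : ℂ)⁻¹ • (K n * ρ * (K n)ᴴ)
        = ∑ i, (w' i : ℂ) • vecMulVec (v' i) (star (v' i)) := by
      rw [hKrho n, Finset.smul_sum]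
      refine Finset.sum_congr rfl fun i _ => ?_
      rcases (hwnn n i).lt_or_eq with hpos | h0
      · rw [hv', aux_vecMulVec_smul, smul_smul, smul_smul]
        congr 1
        rw [RCLike.star_def, Complex.conj_ofReal]
        have hw'i : w' i = p i * w n i / q := rfl
        rw [hw'i]
        have hr : q⁻¹ * p i
            = p i * w n i / q * ((Real.sqrt (w n i))⁻¹ * (Real.sqrt (w n i))⁻¹) := by
          rw [← mul_inv, Real.mul_self_sqrt (hwnn n i)]
          field_simp
        exact_mod_cast hr
      · have hz : (K n) *ᵥ ψ i = 0 := hmul0 n i h0.symm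
        have hvv : ∀ u : Fin d → ℂ, u = 0 →
            vecMulVec u (star u) = (0 : Matrix (Fin d) (Fin d) ℂ) := by
          intro u hu; subst hu; ext a b; simp [vecMulVec_apply]
        rw [hvv _ hz, hvv (v' i) (by rw [hv']; simp only []; rw [hz, smul_zero]),
          smul_zero, smul_zero, smul_zero]
    have hmem := mem_decompSet _ w' v' hw'nn hw'sum hv'unit hρn
    have hle : logCohNum (((q : ℝ) : ℂ)⁻¹ • (K n * ρ * (K n)ᴴ))
        ≤ ∑ i, w' i * logCohRank (v' i) := csInf_le (decompSet_bddBelow _) hmem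
    calc q * logCohNum (((q : ℝ) : ℂ)⁻¹ • (K n * ρ * (K n)ᴴ))
        ≤ q * ∑ i, w' i * logCohRank (v' i) := by
          exact mul_le_mul_of_nonneg_left hle hqn.le
      _ = ∑ i, p i * w n i * logCohRank ((K n) *ᵥ ψ i) := by
          rw [Finset.mul_sum]
          refine Finset.sum_congr rfl fun i _ => ?_
          have hw'i : w' i = p i * w n i / q := rfl
          rcases (hwnn n i).lt_or_eq with hpos | h0
          · have hc : ((((Real.sqrt (w n i))⁻¹ : ℝ)) : ℂ) ≠ 0 := by
              simp only [ne_eq, Complex.ofReal_eq_zero, inv_eq_zero]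
              exact (Real.sqrt_pos.mpr hpos).ne'
            have hL : logCohRank (v' i) = logCohRank ((K n) *ᵥ ψ i) := by
              rw [hv']; exact logCohRank_smul hc _
            rw [hL, hw'i]
            field_simp
            try ring
          · rw [hw'i, ← h0]
            ring
  calc ∑ n ∈ Finset.univ.filter (fun n => 0 < ((K n * ρ * (K n)ᴴ).trace).re),
        ((K n * ρ * (K n)ᴴ).trace).re *
          logCohNum (((((K n * ρ * (K n)ᴴ).trace).re : ℝ) : ℂ)⁻¹ • (K n * ρ * (K n)ᴴ))
      ≤ ∑ n ∈ Finset.univ.filter (fun n => 0 < ((K n * ρ * (K n)ᴴ).trace).re),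
          ∑ i, p i * w n i * logCohRank ((K n) *ᵥ ψ i) := by
        refine Finset.sum_le_sum fun n hn => hbound n ?_
        exact (Finset.mem_filter.mp hn).2
    _ ≤ ∑ n ∈ Finset.univ.filter (fun n => 0 < ((K n * ρ * (K n)ᴴ).trace).re),
          ∑ i, p i * w n i * logCohRank (ψ i) := by
        refine Finset.sum_le_sum fun n _ => Finset.sum_le_sum fun i _ => ?_
        rcases (hwnn n i).lt_or_eq with hpos | h0
        · have hKne : (K n) *ᵥ ψ i ≠ 0 := by
            intro hz
            rw [hwdef] at hpos
            simp only [hz] at hpos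
            simp at hpos
          refine mul_le_mul_of_nonneg_left ?_ (mul_nonneg (hp i).le (hwnn n i))
          refine Real.logb_le_logb_of_le one_lt_two ?_ ?_
          · exact_mod_cast cohRank_pos hKne
          · exact_mod_cast cohRank_mulVec_le (hinc n) (ψ i)
        · rw [← h0]; simp
    _ ≤ ∑ n, ∑ i, p i * w n i * logCohRank (ψ i) := by
        refine Finset.sum_le_sum_of_subset_of_nonneg (Finset.filter_subset _ _) ?_
        intro n _ _
        exact Finset.sum_nonneg fun i _ =>
          mul_nonneg (mul_nonneg (hp i).le (hwnn n i))
            (logCohRank_nonneg (unit_ne_zero (hpsiunit i)))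
    _ = ∑ i, p i * logCohRank (ψ i) := by
        rw [Finset.sum_comm]
        refine Finset.sum_congr rfl fun i _ => ?_
        have harr : ∀ n, p i * w n i * logCohRank (ψ i)
            = (p i * logCohRank (ψ i)) * w n i := fun n => by ring
        rw [Finset.sum_congr rfl fun n _ => harr n, ← Finset.mul_sum, hF2 i, mul_one]
end

section
/- For the noisy maximally coherent states ρ_λ = λ|ψ_M⟩⟨ψ_M| + (1−λ) I/d on ℂ^d, where λ ∈ [0,1] and |ψ_M⟩ = (1/√d) Σ_{j=0}^{d−1} e^{iθ_j}|j⟩ is a maximally coherent state, the logarithmic coherence number is L_C(ρ_λ) = λ log₂ d. -/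
open scoped BigOperators ComplexOrder Matrix

-- chord inequality for log
lemma log_chord {d : ℕ} (hd2 : 2 ≤ d) {t : ℝ} (ht1 : 1 ≤ t) (htd : t ≤ d) :
    (t - 1) / ((d : ℝ) - 1) * Real.log d ≤ Real.log t := by
  have hd1 : (1:ℝ) < (d:ℝ) := by exact_mod_cast hd2.trans_lt' one_lt_two
  have hden : (0:ℝ) < (d:ℝ) - 1 := by linarith
  set a : ℝ := ((d:ℝ) - t) / ((d:ℝ) - 1) with ha'
  set b : ℝ := (t - 1) / ((d:ℝ) - 1) with hb'
  have ha : 0 ≤ a := div_nonneg (by linarith) hden.le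
  have hb : 0 ≤ b := div_nonneg (by linarith) hden.le
  have hab : a + b = 1 := by
    rw [ha', hb', ← add_div, div_eq_one_iff_eq hden.ne']; ring
  have h := strictConcaveOn_log_Ioi.concaveOn.2 (Set.mem_Ioi.2 one_pos)
      (Set.mem_Ioi.2 (by linarith : (0:ℝ) < (d:ℝ))) ha hb hab
  have hx : a • (1:ℝ) + b • (d:ℝ) = t := by
    rw [ha', hb']; simp only [smul_eq_mul]
    rw [div_mul_eq_mul_div, div_mul_eq_mul_div, ← add_div, div_eq_iff hden.ne']; ring
  rw [hx] at h
  simpa [Real.log_one, smul_eq_mul, hb'] using h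

lemma term_bound {d R : ℕ} (hR1 : 1 ≤ R) (hRd : R ≤ d) {f : ℝ}
    (hfR : (d:ℝ) * f ≤ R) :
    ((d:ℝ) * f - 1) / ((d:ℝ) - 1) * Real.logb 2 d ≤ Real.logb 2 R := by
  have hR1' : (1:ℝ) ≤ (R:ℝ) := by exact_mod_cast hR1
  have hlogR : 0 ≤ Real.logb 2 R := Real.logb_nonneg one_lt_two hR1'
  rcases Nat.lt_or_ge d 2 with hd1 | hd2
  · have : d = 1 := by omega
    subst this
    simp [hlogR]
  · have hd1 : (1:ℝ) < (d:ℝ) := by exact_mod_cast hd2.trans_lt' one_lt_two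
    have hden : (0:ℝ) < (d:ℝ) - 1 := by linarith
    have hlogd : 0 ≤ Real.logb 2 d := Real.logb_nonneg one_lt_two (by linarith)
    rcases le_or_gt ((d:ℝ) * f) 1 with hsm | hbig
    · have hnum : ((d:ℝ) * f - 1) / ((d:ℝ) - 1) ≤ 0 :=
        div_nonpos_of_nonpos_of_nonneg (by linarith) hden.le
      calc ((d:ℝ) * f - 1) / ((d:ℝ) - 1) * Real.logb 2 d ≤ 0 :=
            mul_nonpos_of_nonpos_of_nonneg hnum hlogd
        _ ≤ Real.logb 2 R := hlogR
    · have ht1 : 1 ≤ (d:ℝ) * f := hbig.le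
      have htR : (d:ℝ) * f ≤ (R:ℝ) := hfR
      have htd : (d:ℝ) * f ≤ (d:ℝ) := htR.trans (by exact_mod_cast hRd)
      have h := log_chord hd2 ht1 htd
      have hlog2 : 0 < Real.log 2 := Real.log_pos one_lt_two
      have h2 : ((d:ℝ) * f - 1) / ((d:ℝ) - 1) * Real.logb 2 d ≤ Real.logb 2 ((d:ℝ)*f) := by
        rw [Real.logb, Real.logb, mul_div_assoc'] -- ?
        exact div_le_div_of_nonneg_right h hlog2.le
      have h3 : Real.logb 2 ((d:ℝ)*f) ≤ Real.logb 2 R :=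
        (Real.logb_le_logb one_lt_two (by linarith) (by linarith)).2 htR
      linarith

lemma cohRank_le {ι : Type*} [Fintype ι] (φ : ι → ℂ) : cohRank φ ≤ Fintype.card ι := by
  classical
  refine le_trans (Finset.card_filter_le _ _) (by simp)

lemma one_le_cohRank {ι : Type*} [Fintype ι] {φ : ι → ℂ}
    (hφ : ∑ x, ‖φ x‖ ^ 2 = 1) : 1 ≤ cohRank φ := by
  classical
  have hex : ∃ x, φ x ≠ 0 := by
    by_contra hall
    push_neg at hall
    simp [hall] at hφ
  obtain ⟨x, hx⟩ := hex
  have : 0 < cohRank φ := by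
    rw [cohRank]
    exact Finset.card_pos.2 ⟨x, by simpa using hx⟩
  omega

lemma norm_of_unif {d : ℕ} {ψM : Fin d → ℂ} (hψ : ∀ j, ‖ψM j‖ ^ 2 = 1 / d)
    (j : Fin d) : ‖ψM j‖ = (Real.sqrt d)⁻¹ := by
  have h : ‖ψM j‖ = Real.sqrt (1 / d) := by
    rw [← hψ j, Real.sqrt_sq (norm_nonneg _)]
  rw [h, one_div, Real.sqrt_inv]

lemma cs_bound {d : ℕ} (hd : 0 < d) {ψM φ : Fin d → ℂ}
    (hψ : ∀ j, ‖ψM j‖ ^ 2 = 1 / d) (hφ : ∑ x, ‖φ x‖ ^ 2 = 1) :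
    (d:ℝ) * ‖∑ j, (starRingEnd ℂ) (ψM j) * φ j‖ ^ 2 ≤ (cohRank φ : ℝ) := by
  classical
  set s : Finset (Fin d) := Finset.univ.filter fun j => φ j ≠ 0 with hs
  have hcard : (cohRank φ : ℝ) = (s.card : ℝ) := by
    rw [cohRank]
  have h1 : ‖∑ j, (starRingEnd ℂ) (ψM j) * φ j‖ ≤ (Real.sqrt d)⁻¹ * ∑ j ∈ s, ‖φ j‖ := by
    calc ‖∑ j, (starRingEnd ℂ) (ψM j) * φ j‖ ≤ ∑ j, ‖(starRingEnd ℂ) (ψM j) * φ j‖ :=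
          norm_sum_le _ _
      _ = ∑ j, (Real.sqrt d)⁻¹ * ‖φ j‖ := by
          refine Finset.sum_congr rfl fun j _ => ?_
          rw [norm_mul, RCLike.norm_conj, norm_of_unif hψ]
      _ = (Real.sqrt d)⁻¹ * ∑ j, ‖φ j‖ := by rw [Finset.mul_sum]
      _ = (Real.sqrt d)⁻¹ * ∑ j ∈ s, ‖φ j‖ := by
          congr 1
          refine (Finset.sum_subset (Finset.subset_univ s) fun j _ hj => ?_).symm
          simp only [hs, Finset.mem_filter, Finset.mem_univ, true_and, not_not] at hj
          simp [hj]
  have h3 : (∑ j ∈ s, ‖φ j‖) ^ 2 ≤ (s.card : ℝ) * ∑ j ∈ s, ‖φ j‖ ^ 2 := by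
    have := Finset.sum_mul_sq_le_sq_mul_sq s (fun _ => (1:ℝ)) (fun j => ‖φ j‖)
    simpa using this
  have h4 : ∑ j ∈ s, ‖φ j‖ ^ 2 ≤ 1 := by
    rw [← hφ]
    exact Finset.sum_le_sum_of_subset_of_nonneg (Finset.subset_univ s)
      (fun j _ _ => by positivity)
  have hsq : ‖∑ j, (starRingEnd ℂ) (ψM j) * φ j‖ ^ 2
      ≤ ((Real.sqrt d)⁻¹) ^ 2 * ((s.card : ℝ) * 1) := by
    calc ‖∑ j, (starRingEnd ℂ) (ψM j) * φ j‖ ^ 2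
        ≤ ((Real.sqrt d)⁻¹ * ∑ j ∈ s, ‖φ j‖) ^ 2 :=
          pow_le_pow_left₀ (norm_nonneg _) h1 2
      _ = ((Real.sqrt d)⁻¹) ^ 2 * (∑ j ∈ s, ‖φ j‖) ^ 2 := by rw [mul_pow]
      _ ≤ ((Real.sqrt d)⁻¹) ^ 2 * ((s.card : ℝ) * 1) := by
          refine mul_le_mul_of_nonneg_left ?_ (by positivity)
          calc (∑ j ∈ s, ‖φ j‖) ^ 2 ≤ (s.card : ℝ) * ∑ j ∈ s, ‖φ j‖ ^ 2 := h3
            _ ≤ (s.card : ℝ) * 1 := by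
                exact mul_le_mul_of_nonneg_left h4 (by positivity)
  have hdr : (0:ℝ) < d := by exact_mod_cast hd
  have hinv : ((Real.sqrt d)⁻¹) ^ 2 = (d:ℝ)⁻¹ := by
    rw [← Real.sqrt_inv]
    exact Real.sq_sqrt (by positivity)
  rw [hcard]
  calc (d:ℝ) * ‖∑ j, (starRingEnd ℂ) (ψM j) * φ j‖ ^ 2
      ≤ (d:ℝ) * (((Real.sqrt d)⁻¹) ^ 2 * ((s.card : ℝ) * 1)) :=
        mul_le_mul_of_nonneg_left hsq hdr.le
    _ = (s.card : ℝ) := by rw [hinv]; field_simp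

lemma conj_mul_self (z : ℂ) : (starRingEnd ℂ) z * z = ((‖z‖ ^ 2 : ℝ) : ℂ) := by
  rw [mul_comm, Complex.mul_conj, Complex.normSq_eq_norm_sq]

lemma sum_self_overlap {d : ℕ} (hd : 0 < d) {ψM : Fin d → ℂ}
    (hψ : ∀ j, ‖ψM j‖ ^ 2 = 1 / d) :
    ∑ j, (starRingEnd ℂ) (ψM j) * ψM j = 1 := by
  have h : ∀ j : Fin d, (starRingEnd ℂ) (ψM j) * ψM j = ((1/(d:ℝ) : ℝ) : ℂ) := by
    intro j; rw [conj_mul_self, hψ j]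
  rw [Finset.sum_congr rfl fun j _ => h j, Finset.sum_const, Finset.card_univ,
    Fintype.card_fin, nsmul_eq_mul]
  have hd' : (d : ℂ) ≠ 0 := Nat.cast_ne_zero.2 hd.ne'
  push_cast
  field_simp

lemma mean_overlap {d : ℕ} (hd : 0 < d) {ψM : Fin d → ℂ}
    (hψ : ∀ j, ‖ψM j‖ ^ 2 = 1 / d) (lam : ℝ)
    {n : ℕ} (p : Fin n → ℝ) (ψ : Fin n → Fin d → ℂ)
    (hρ : (lam : ℂ) • Matrix.vecMulVec ψM (star ψM)
        + (((1 - lam : ℝ) : ℂ) / d) • (1 : Matrix (Fin d) (Fin d) ℂ)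
        = ∑ i, (p i : ℂ) • Matrix.vecMulVec (ψ i) (star (ψ i))) :
    ∑ i, p i * ‖∑ j, (starRingEnd ℂ) (ψM j) * ψ i j‖ ^ 2 = lam + (1 - lam) / d := by
  classical
  set c0 : ℂ := ((1 - lam : ℝ) : ℂ) / d with hc0
  have hent : ∀ j l, (lam : ℂ) * (ψM j * (starRingEnd ℂ) (ψM l))
      + c0 * (if j = l then 1 else 0)
      = ∑ i, (p i : ℂ) * (ψ i j * (starRingEnd ℂ) (ψ i l)) := by
    intro j l
    have h := congrFun (congrFun hρ j) l
    simpa [Matrix.add_apply, Matrix.smul_apply, Matrix.vecMulVec_apply,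
      Matrix.one_apply, Matrix.sum_apply, Pi.star_apply, Complex.star_def,
      smul_eq_mul] using h
  set c : Fin n → ℂ := fun i => ∑ j, (starRingEnd ℂ) (ψM j) * ψ i j with hc
  have key : ∑ j, ∑ l, (starRingEnd ℂ) (ψM j) * ψM l *
        ((lam : ℂ) * (ψM j * (starRingEnd ℂ) (ψM l)) + c0 * (if j = l then 1 else 0))
      = ∑ j, ∑ l, (starRingEnd ℂ) (ψM j) * ψM l *
        (∑ i, (p i : ℂ) * (ψ i j * (starRingEnd ℂ) (ψ i l))) := by
    refine Finset.sum_congr rfl fun j _ => Finset.sum_congr rfl fun l _ => ?_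
    rw [hent j l]
  have hS := sum_self_overlap hd hψ
  -- evaluate the left side
  have hL : ∑ j, ∑ l, (starRingEnd ℂ) (ψM j) * ψM l *
        ((lam : ℂ) * (ψM j * (starRingEnd ℂ) (ψM l)) + c0 * (if j = l then 1 else 0))
      = (lam : ℂ) + c0 := by
    have e1 : ∀ j l : Fin d, (starRingEnd ℂ) (ψM j) * ψM l *
          ((lam : ℂ) * (ψM j * (starRingEnd ℂ) (ψM l)) + c0 * (if j = l then 1 else 0))
        = (lam : ℂ) * (((starRingEnd ℂ) (ψM j) * ψM j) * ((starRingEnd ℂ) (ψM l) * ψM l))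
          + c0 * ((starRingEnd ℂ) (ψM j) * ψM l * (if j = l then 1 else 0)) := by
      intro j l; ring
    have e2 : ∀ j : Fin d, ∑ l, (starRingEnd ℂ) (ψM j) * ψM l * (if j = l then (1:ℂ) else 0)
        = (starRingEnd ℂ) (ψM j) * ψM j := by
      intro j
      simp [mul_ite]
    calc ∑ j, ∑ l, (starRingEnd ℂ) (ψM j) * ψM l *
          ((lam : ℂ) * (ψM j * (starRingEnd ℂ) (ψM l)) + c0 * (if j = l then 1 else 0))
        = ∑ j, ∑ l, ((lam : ℂ) * (((starRingEnd ℂ) (ψM j) * ψM j) * ((starRingEnd ℂ) (ψM l) * ψM l))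
          + c0 * ((starRingEnd ℂ) (ψM j) * ψM l * (if j = l then 1 else 0))) := by
          exact Finset.sum_congr rfl fun j _ => Finset.sum_congr rfl fun l _ => e1 j l
      _ = (∑ j, ∑ l, (lam : ℂ) * (((starRingEnd ℂ) (ψM j) * ψM j) * ((starRingEnd ℂ) (ψM l) * ψM l)))
          + ∑ j, ∑ l, c0 * ((starRingEnd ℂ) (ψM j) * ψM l * (if j = l then 1 else 0)) := by
          simp [Finset.sum_add_distrib]
      _ = (lam : ℂ) * ((∑ j, (starRingEnd ℂ) (ψM j) * ψM j) * (∑ l, (starRingEnd ℂ) (ψM l) * ψM l))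
          + c0 * ∑ j, ((starRingEnd ℂ) (ψM j) * ψM j) := by
          congr 1
          · simp only [← Finset.mul_sum, ← Finset.sum_mul]
          · calc ∑ j, ∑ l, c0 * ((starRingEnd ℂ) (ψM j) * ψM l * (if j = l then 1 else 0))
                = ∑ j, c0 * ((starRingEnd ℂ) (ψM j) * ψM j) :=
                  Finset.sum_congr rfl fun j _ => by rw [← Finset.mul_sum, e2 j]
              _ = c0 * ∑ j, (starRingEnd ℂ) (ψM j) * ψM j := (Finset.mul_sum _ _ _).symm
      _ = (lam : ℂ) + c0 := by rw [hS]; ring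
  -- evaluate the right side
  have hR : ∑ j, ∑ l, (starRingEnd ℂ) (ψM j) * ψM l *
        (∑ i, (p i : ℂ) * (ψ i j * (starRingEnd ℂ) (ψ i l)))
      = ∑ i, (p i : ℂ) * (c i * (starRingEnd ℂ) (c i)) := by
    have e1 : ∀ j l : Fin d, (starRingEnd ℂ) (ψM j) * ψM l *
          (∑ i, (p i : ℂ) * (ψ i j * (starRingEnd ℂ) (ψ i l)))
        = ∑ i, (p i : ℂ) * (((starRingEnd ℂ) (ψM j) * ψ i j) * (ψM l * (starRingEnd ℂ) (ψ i l))) := by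
      intro j l
      rw [Finset.mul_sum]
      exact Finset.sum_congr rfl fun i _ => by ring
    calc ∑ j, ∑ l, (starRingEnd ℂ) (ψM j) * ψM l *
          (∑ i, (p i : ℂ) * (ψ i j * (starRingEnd ℂ) (ψ i l)))
        = ∑ j, ∑ l, ∑ i, (p i : ℂ) * (((starRingEnd ℂ) (ψM j) * ψ i j) * (ψM l * (starRingEnd ℂ) (ψ i l))) := by
          exact Finset.sum_congr rfl fun j _ => Finset.sum_congr rfl fun l _ => e1 j l
      _ = ∑ j, ∑ i, ∑ l, (p i : ℂ) * (((starRingEnd ℂ) (ψM j) * ψ i j) * (ψM l * (starRingEnd ℂ) (ψ i l))) := by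
          exact Finset.sum_congr rfl fun j _ => Finset.sum_comm
      _ = ∑ i, ∑ j, ∑ l, (p i : ℂ) * (((starRingEnd ℂ) (ψM j) * ψ i j) * (ψM l * (starRingEnd ℂ) (ψ i l))) :=
          Finset.sum_comm
      _ = ∑ i, (p i : ℂ) * ((∑ j, (starRingEnd ℂ) (ψM j) * ψ i j) * (∑ l, ψM l * (starRingEnd ℂ) (ψ i l))) := by
          refine Finset.sum_congr rfl fun i _ => ?_
          simp only [← Finset.mul_sum, ← Finset.sum_mul]
      _ = ∑ i, (p i : ℂ) * (c i * (starRingEnd ℂ) (c i)) := by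
          refine Finset.sum_congr rfl fun i _ => ?_
          have hconj : (starRingEnd ℂ) (c i) = ∑ l, ψM l * (starRingEnd ℂ) (ψ i l) := by
            rw [hc]
            simp only [map_sum, map_mul, Complex.conj_conj]
          rw [hconj, hc]
  -- combine
  rw [hL, hR] at key
  have hcc : ∀ i, c i * (starRingEnd ℂ) (c i) = ((‖c i‖ ^ 2 : ℝ) : ℂ) := fun i => by
    rw [mul_comm, conj_mul_self]
  have hcast : ((∑ i, p i * ‖c i‖ ^ 2 : ℝ) : ℂ) = ∑ i, (p i : ℂ) * (c i * (starRingEnd ℂ) (c i)) := by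
    push_cast
    exact Finset.sum_congr rfl fun i _ => by rw [hcc i]; push_cast; ring
  have hcast2 : ((lam + (1 - lam)/d : ℝ) : ℂ) = (lam : ℂ) + c0 := by
    rw [hc0]; push_cast; ring
  have hfin : ((∑ i, p i * ‖c i‖ ^ 2 : ℝ) : ℂ) = ((lam + (1 - lam)/d : ℝ) : ℂ) := by
    rw [hcast, hcast2, ← key]
  have hfin2 : ∑ i, p i * ‖c i‖ ^ 2 = lam + (1 - lam)/d := by exact_mod_cast hfin
  exact hfin2

lemma decomp_lower {d : ℕ} (hd : 0 < d) {ψM : Fin d → ℂ}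
    (hψ : ∀ j, ‖ψM j‖ ^ 2 = 1 / d) {lam : ℝ} (h0 : 0 ≤ lam) (h1 : lam ≤ 1)
    {n : ℕ} {p : Fin n → ℝ} {ψ : Fin n → Fin d → ℂ}
    (hdec : IsDecomp ((lam : ℂ) • Matrix.vecMulVec ψM (star ψM)
        + (((1 - lam : ℝ) : ℂ) / d) • (1 : Matrix (Fin d) (Fin d) ℂ)) p ψ) :
    lam * Real.logb 2 d ≤ ∑ i, p i * logCohRank (ψ i) := by
  obtain ⟨hp, hp1, hunit, hρ⟩ := hdec
  set f : Fin n → ℝ := fun i => ‖∑ j, (starRingEnd ℂ) (ψM j) * ψ i j‖ ^ 2 with hf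
  have hmean : ∑ i, p i * f i = lam + (1 - lam) / d := mean_overlap hd hψ lam p ψ hρ
  have hcs : ∀ i, (d:ℝ) * f i ≤ (cohRank (ψ i) : ℝ) := fun i => cs_bound hd hψ (hunit i)
  have hR1 : ∀ i, 1 ≤ cohRank (ψ i) := fun i => one_le_cohRank (hunit i)
  have hRd : ∀ i, cohRank (ψ i) ≤ d := fun i => by
    simpa using cohRank_le (ψ i)
  have hterm : ∀ i, ((d:ℝ) * f i - 1) / ((d:ℝ) - 1) * Real.logb 2 d ≤ logCohRank (ψ i) :=
    fun i => term_bound (hR1 i) (hRd i) (hcs i)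
  have hsum : ∑ i, p i * (((d:ℝ) * f i - 1) / ((d:ℝ) - 1) * Real.logb 2 d)
      ≤ ∑ i, p i * logCohRank (ψ i) :=
    Finset.sum_le_sum fun i _ => mul_le_mul_of_nonneg_left (hterm i) (hp i).le
  set L := Real.logb 2 (d:ℝ) with hL
  set D := (d:ℝ) - 1 with hD
  have hval : ∑ i, p i * (((d:ℝ) * f i - 1) / D * L)
      = ((d:ℝ) * (lam + (1 - lam) / d) - 1) / D * L := by
    calc ∑ i, p i * (((d:ℝ) * f i - 1) / D * L)
        = ∑ i, ((p i * f i) * ((d:ℝ) * L / D) - p i * (L / D)) :=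
          Finset.sum_congr rfl fun i _ => by ring
      _ = (∑ i, p i * f i) * ((d:ℝ) * L / D) - (∑ i, p i) * (L / D) := by
          rw [Finset.sum_sub_distrib, Finset.sum_mul, Finset.sum_mul]
      _ = ((d:ℝ) * (lam + (1 - lam) / d) - 1) / D * L := by
          rw [hmean, hp1]; ring
  rcases Nat.lt_or_ge d 2 with hd2 | hd2
  · have hd1 : d = 1 := by omega
    subst hd1
    have hz : lam * Real.logb 2 ((1:ℕ):ℝ) = 0 := by
      norm_num
    rw [hz]
    refine Finset.sum_nonneg fun i _ => mul_nonneg (hp i).le ?_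
    rw [logCohRank]
    exact Real.logb_nonneg one_lt_two (by exact_mod_cast hR1 i)
  · have hd1 : (1:ℝ) < (d:ℝ) := by exact_mod_cast hd2.trans_lt' one_lt_two
    have hDpos : 0 < D := by rw [hD]; linarith
    have hnum : (d:ℝ) * (lam + (1 - lam) / d) - 1 = lam * D := by
      rw [hD]; field_simp; ring
    have : ((d:ℝ) * (lam + (1 - lam) / d) - 1) / D * L = lam * L := by
      rw [hnum, mul_div_assoc, div_self hDpos.ne', mul_one]
    linarith [hsum, hval, this]

lemma single_unit {d : ℕ} (j : Fin d) :
    ∑ x, ‖(Pi.single j 1 : Fin d → ℂ) x‖ ^ 2 = 1 := by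
  classical
  have : ∀ x : Fin d, ‖(Pi.single j 1 : Fin d → ℂ) x‖ ^ 2 = if x = j then 1 else 0 := by
    intro x
    by_cases h : x = j <;> simp [h, Pi.single_apply]
  rw [Finset.sum_congr rfl fun x _ => this x]
  simp

lemma cohRank_single {d : ℕ} (j : Fin d) :
    cohRank (Pi.single j 1 : Fin d → ℂ) = 1 := by
  classical
  rw [cohRank]
  have : (Finset.univ.filter fun x => (Pi.single j 1 : Fin d → ℂ) x ≠ 0) = {j} := by
    ext x
    by_cases h : x = j <;> simp [h, Pi.single_apply]
  rw [this, Finset.card_singleton]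

lemma sum_single_outer {d : ℕ} :
    ∑ j : Fin d, Matrix.vecMulVec (Pi.single j 1 : Fin d → ℂ)
      (star (Pi.single j 1 : Fin d → ℂ)) = (1 : Matrix (Fin d) (Fin d) ℂ) := by
  classical
  ext a b
  rw [Matrix.sum_apply]
  have : ∀ j : Fin d, Matrix.vecMulVec (Pi.single j 1 : Fin d → ℂ)
      (star (Pi.single j 1 : Fin d → ℂ)) a b
      = if a = j then (if b = j then 1 else 0) else 0 := by
    intro j
    rw [Matrix.vecMulVec_apply, Pi.star_apply]
    by_cases h : a = j <;> by_cases h' : b = j <;> simp [h, h', Pi.single_apply]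
  rw [Finset.sum_congr rfl fun j _ => this j]
  by_cases hab : a = b
  · subst hab
    simp [Matrix.one_apply]
  · rw [Matrix.one_apply_ne hab]
    apply Finset.sum_eq_zero
    intro j _
    by_cases h : a = j <;> by_cases h' : b = j
    · exact absurd (h.trans h'.symm) hab
    all_goals simp [h, h']

lemma cohRank_max {d : ℕ} (hd : 0 < d) (θ : Fin d → ℝ) :
    cohRank (fun j : Fin d => ((Real.sqrt d)⁻¹ : ℂ) * Complex.exp ((θ j : ℂ) * Complex.I)) = d := by
  classical
  rw [cohRank]
  have hne : ∀ j : Fin d, ((Real.sqrt d)⁻¹ : ℂ) * Complex.exp ((θ j : ℂ) * Complex.I) ≠ 0 := by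
    intro j
    apply mul_ne_zero
    · simp only [ne_eq, inv_eq_zero]
      exact_mod_cast (Real.sqrt_pos.2 (by exact_mod_cast hd)).ne'
    · exact Complex.exp_ne_zero _
  rw [Finset.filter_true_of_mem fun j _ => hne j]
  simp

lemma psiM_norm {d : ℕ} (hd : 0 < d) (θ : Fin d → ℝ) (j : Fin d) :
    ‖((Real.sqrt d)⁻¹ : ℂ) * Complex.exp ((θ j : ℂ) * Complex.I)‖ ^ 2 = 1 / d := by
  rw [norm_mul, Complex.norm_exp_ofReal_mul_I, mul_one, norm_inv]
  have h : ‖((Real.sqrt d : ℝ) : ℂ)‖ = Real.sqrt d := by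
    rw [Complex.norm_real, Real.norm_eq_abs, abs_of_nonneg (Real.sqrt_nonneg _)]
  rw [h, ← Real.sqrt_inv, Real.sq_sqrt (by positivity), inv_eq_one_div]

lemma psiM_unit {d : ℕ} (hd : 0 < d) (θ : Fin d → ℝ) :
    ∑ x, ‖((Real.sqrt d)⁻¹ : ℂ) * Complex.exp ((θ x : ℂ) * Complex.I)‖ ^ 2 = 1 := by
  rw [Finset.sum_congr rfl fun x _ => psiM_norm hd θ x]
  rw [Finset.sum_const, Finset.card_univ, Fintype.card_fin, nsmul_eq_mul]
  field_simp
/-- for the noisy maximally coherent states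
ρ_λ = λ|ψ_M⟩⟨ψ_M| + (1−λ)I/d with |ψ_M⟩ = (1/√d)∑ⱼ e^{iθⱼ}|j⟩, the logarithmic
coherence number is L_C(ρ_λ) = λ log₂ d. -/
theorem logCohNum_noisy_max_coherent (d : ℕ) (hd : 0 < d) (θ : Fin d → ℝ)
    (lam : ℝ) (h0 : 0 ≤ lam) (h1 : lam ≤ 1) :
    logCohNum
        ((lam : ℂ) • Matrix.vecMulVec
            (fun j : Fin d => ((Real.sqrt d)⁻¹ : ℂ) * Complex.exp ((θ j : ℂ) * Complex.I))
            (star fun j : Fin d => ((Real.sqrt d)⁻¹ : ℂ) * Complex.exp ((θ j : ℂ) * Complex.I))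
          + (((1 - lam : ℝ) : ℂ) / d) • (1 : Matrix (Fin d) (Fin d) ℂ))
      = lam * Real.logb 2 d := by
  classical
  set ψM : Fin d → ℂ :=
    fun j : Fin d => ((Real.sqrt d)⁻¹ : ℂ) * Complex.exp ((θ j : ℂ) * Complex.I) with hψM
  have hψnorm : ∀ j, ‖ψM j‖ ^ 2 = 1 / d := fun j => by rw [hψM]; exact psiM_norm hd θ j
  have hψunit : ∑ x, ‖ψM x‖ ^ 2 = 1 := by rw [hψM]; exact psiM_unit hd θ
  have hψrank : cohRank ψM = d := by rw [hψM]; exact cohRank_max hd θ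
  rw [logCohNum]
  have hmem : (lam * Real.logb 2 (d:ℝ)) ∈ { x | ∃ (n : ℕ) (p : Fin n → ℝ) (ψ : Fin n → Fin d → ℂ),
      IsDecomp ((lam : ℂ) • Matrix.vecMulVec ψM (star ψM)
        + (((1 - lam : ℝ) : ℂ) / d) • (1 : Matrix (Fin d) (Fin d) ℂ)) p ψ ∧
      x = ∑ i, p i * logCohRank (ψ i) } := by
    rcases eq_or_lt_of_le h0 with hl0 | hl0
    · -- lam = 0
      subst hl0
      refine ⟨d, fun _ => 1/(d:ℝ), fun j => Pi.single j 1, ⟨?_, ?_, ?_, ?_⟩, ?_⟩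
      · intro i; exact one_div_pos.2 (by exact_mod_cast hd)
      · rw [Finset.sum_const, Finset.card_univ, Fintype.card_fin, nsmul_eq_mul]
        field_simp
      · intro i; exact single_unit i
      · rw [← Finset.smul_sum, sum_single_outer]
        push_cast
        ring_nf
        rw [zero_smul, zero_add]
      · simp [logCohRank, cohRank_single]
    rcases eq_or_lt_of_le h1 with hl1 | hl1
    · -- lam = 1
      subst hl1
      refine ⟨1, fun _ => 1, fun _ => ψM, ⟨?_, ?_, ?_, ?_⟩, ?_⟩
      · intro i; exact one_pos
      · simp
      · intro i; exact hψunit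
      · norm_num
      · simp [logCohRank, hψrank]
    · -- 0 < lam < 1
      refine ⟨d+1, Fin.cons lam (fun _ => (1-lam)/(d:ℝ)), Fin.cons ψM (fun j => Pi.single j 1),
        ⟨?_, ?_, ?_, ?_⟩, ?_⟩
      · intro i
        refine Fin.cases ?_ ?_ i
        · simpa using hl0
        · intro j
          simp only [Fin.cons_succ]
          exact div_pos (by linarith) (by exact_mod_cast hd)
      · rw [Fin.sum_cons, Finset.sum_const, Finset.card_univ, Fintype.card_fin, nsmul_eq_mul]
        field_simp
        ring
      · intro i
        refine Fin.cases ?_ ?_ i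
        · simpa using hψunit
        · intro j; simpa using single_unit j
      · rw [Fin.sum_univ_succ]
        simp only [Fin.cons_zero, Fin.cons_succ]
        rw [← Finset.smul_sum, sum_single_outer]
        push_cast
        ring_nf
      · rw [Fin.sum_univ_succ]
        simp only [Fin.cons_zero, Fin.cons_succ]
        simp [logCohRank, hψrank, cohRank_single]
  refine le_antisymm (csInf_le ⟨lam * Real.logb 2 (d:ℝ), ?_⟩ hmem) (le_csInf ⟨_, hmem⟩ ?_)
  · rintro x ⟨n, p, ψ, hdec, rfl⟩
    exact decomp_lower hd hψnorm h0 h1 hdec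
  · rintro x ⟨n, p, ψ, hdec, rfl⟩
    exact decomp_lower hd hψnorm h0 h1 hdec
end

section
/- The entanglement generated from a state via an incoherent operation is bounded above by its logarithmic coherence number: let ρ^S be a density matrix on ℂ^d, let |0⟩⟨0|^A be the fixed-basis incoherent pure state on an ancilla ℂ^d, and let Λ^{SA} be a completely positive trace-preserving map on SA admitting a Kraus representation by incoherent Kraus operators (with respect to the product basis). Then L_E(Λ^{SA}(ρ^S ⊗ |0⟩⟨0|^A)) ≤ L_C(ρ^S). -/
open scoped BigOperators ComplexOrder Matrix

/-! ### Auxiliary lemmas -/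

set_option maxHeartbeats 1000000 in
/-- rank is at most the number of rows that can be nonzero. -/
lemma rank_le_card_of_support {ι κ : Type*} [Fintype ι] [Fintype κ] [DecidableEq ι]
    (M : Matrix ι κ ℂ) (S : Finset ι) (h : ∀ i ∉ S, ∀ j, M i j = 0) :
    M.rank ≤ S.card := by
  classical
  have hle : LinearMap.range M.mulVecLin ≤
      Submodule.span ℂ ↑(S.image fun i => (Pi.single i (1:ℂ) : ι → ℂ)) := by
    rintro w ⟨v, rfl⟩
    have hw : M.mulVecLin v = ∑ i ∈ S, M.mulVec v i • (Pi.single i (1:ℂ) : ι → ℂ) := by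
      funext x
      rw [Finset.sum_apply]
      simp only [Pi.smul_apply, Pi.single_apply, smul_eq_mul, mul_ite, mul_one, mul_zero]
      rw [Finset.sum_ite_eq S x (fun i => M.mulVec v i)]
      by_cases hx : x ∈ S
      · simp [hx, Matrix.mulVecLin_apply]
      · simp only [hx, if_false]
        have : M.mulVec v x = 0 := by
          simp only [Matrix.mulVec, dotProduct]
          exact Finset.sum_eq_zero fun j _ => by rw [h x hx j, zero_mul]
        simpa [Matrix.mulVecLin_apply] using this
    rw [hw]
    exact Submodule.sum_mem _ fun i hi => Submodule.smul_mem _ _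
      (Submodule.subset_span (Finset.mem_coe.mpr (Finset.mem_image_of_mem _ hi)))
  have h1 : M.rank ≤ Module.finrank ℂ
      (Submodule.span ℂ ↑(S.image fun i => (Pi.single i (1:ℂ) : ι → ℂ))) :=
    Submodule.finrank_mono hle
  exact h1.trans ((finrank_span_finset_le_card _).trans Finset.card_image_le)

lemma rank_pos_of_ne_zero {ι κ : Type*} [Fintype ι] [Fintype κ] [DecidableEq κ]
    {M : Matrix ι κ ℂ} (h : M ≠ 0) : 1 ≤ M.rank := by
  rw [Nat.one_le_iff_ne_zero]
  intro h0
  apply h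
  have hbot : LinearMap.range M.mulVecLin = ⊥ := by
    rw [← Submodule.finrank_eq_zero]
    exact h0
  have hf : M.mulVecLin = 0 := LinearMap.range_eq_bot.mp hbot
  ext i j
  have : M.mulVec (Pi.single j 1) = 0 := by
    have := congrFun (congrArg (fun f => f.toFun) hf) (Pi.single j 1)
    simpa [Matrix.mulVecLin_apply] using this
  have := congrFun this i
  simpa [Matrix.mulVec_single] using this

lemma sum_norm_sq_eq {ι : Type*} [Fintype ι] (w : ι → ℂ) :
    ((∑ x, ‖w x‖ ^ 2 : ℝ) : ℂ) = dotProduct (star w) w := by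
  push_cast
  refine Finset.sum_congr rfl fun x _ => ?_
  rw [Pi.star_apply, Complex.star_def, ← Complex.normSq_eq_conj_mul_self,
    ← Complex.sq_norm]
  push_cast
  ring

lemma trace_outer {ι : Type*} [Fintype ι] (w : ι → ℂ) :
    (Matrix.vecMulVec w (star w)).trace = ((∑ x, ‖w x‖ ^ 2 : ℝ) : ℂ) := by
  rw [sum_norm_sq_eq]
  simp [Matrix.trace, Matrix.diag, Matrix.vecMulVec_apply, dotProduct, mul_comm]

lemma exists_ne_zero_of_unit {ι : Type*} [Fintype ι] {u : ι → ℂ}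
    (h : ∑ x, ‖u x‖ ^ 2 = 1) : ∃ x, u x ≠ 0 := by
  by_contra hno
  push_neg at hno
  rw [Finset.sum_eq_zero (fun x _ => by rw [hno x]; simp)] at h
  norm_num at h

lemma sum_filter_equivFin {J α : Type*} [Fintype J] [AddCommMonoid α]
    (s : Finset J) (F : J → α) (h0 : ∀ j ∉ s, F j = 0) :
    ∑ i : Fin s.card, F (s.equivFin.symm i) = ∑ j, F j := by
  rw [← Equiv.sum_comp s.equivFin (fun i => F (s.equivFin.symm i))]
  simp only [Equiv.symm_apply_apply]
  rw [Finset.sum_coe_sort s F]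
  exact Finset.sum_subset (Finset.subset_univ s) fun j _ hj => h0 j hj

open Classical in
lemma decomp_of_rep {ι J : Type*} [Fintype ι] [Fintype J]
    (ρ : Matrix ι ι ℂ) (c : J → ℝ) (v : J → ι → ℂ)
    (hc : ∀ j, 0 ≤ c j) (hsum : ∑ j, c j = 1)
    (hnorm : ∀ j, c j ≠ 0 → ∑ x, ‖v j x‖ ^ 2 = 1)
    (hρ : ρ = ∑ j, (c j : ℂ) • Matrix.vecMulVec (v j) (star (v j)))
    (g : (ι → ℂ) → ℝ) :
    ∃ (n : ℕ) (p : Fin n → ℝ) (ψ : Fin n → ι → ℂ),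
      IsDecomp ρ p ψ ∧ ∑ i, p i * g (ψ i) = ∑ j, c j * g (v j) := by
  set s : Finset J := Finset.univ.filter fun j => c j ≠ 0 with hs
  have hmem : ∀ i : Fin s.card, c (s.equivFin.symm i) ≠ 0 := fun i => by
    have := (s.equivFin.symm i).2
    exact (Finset.mem_filter.mp this).2
  refine ⟨s.card, fun i => c (s.equivFin.symm i), fun i => v (s.equivFin.symm i),
    ⟨fun i => lt_of_le_of_ne (hc _) (Ne.symm (hmem i)), ?_, fun i => hnorm _ (hmem i), ?_⟩, ?_⟩
  · rw [sum_filter_equivFin s c fun j hj => by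
      by_contra hne
      exact hj (Finset.mem_filter.mpr ⟨Finset.mem_univ _, hne⟩)]
    exact hsum
  · rw [hρ]
    exact (sum_filter_equivFin s (fun j => (c j : ℂ) • Matrix.vecMulVec (v j) (star (v j)))
      (fun j hj => by
        have : c j = 0 := by
          by_contra hne
          exact hj (Finset.mem_filter.mpr ⟨Finset.mem_univ _, hne⟩)
        simp [this])).symm ▸ rfl
  · exact sum_filter_equivFin s (fun j => c j * g (v j)) fun j hj => by
      have : c j = 0 := by
        by_contra hne
        exact hj (Finset.mem_filter.mpr ⟨Finset.mem_univ _, hne⟩)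
      simp [this]

lemma density_rep {ι : Type*} [Fintype ι] [DecidableEq ι] (ρ : Matrix ι ι ℂ)
    (hρ : IsDensity ρ) :
    ∃ (c : ι → ℝ) (v : ι → ι → ℂ), (∀ j, 0 ≤ c j) ∧ (∑ j, c j = 1) ∧
      (∀ j, ∑ x, ‖v j x‖ ^ 2 = 1) ∧
      ρ = ∑ j, (c j : ℂ) • Matrix.vecMulVec (v j) (star (v j)) := by
  obtain ⟨hpsd, htr⟩ := hρ
  have hherm : ρ.IsHermitian := hpsd.1
  set U : Matrix ι ι ℂ := (hherm.eigenvectorUnitary : Matrix ι ι ℂ) with hU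
  set lam : ι → ℝ := hherm.eigenvalues with hlam
  have hUU : star U * U = 1 := Matrix.mem_unitaryGroup_iff'.mp hherm.eigenvectorUnitary.2
  have hcol : ∀ j, ∑ x, ‖U x j‖ ^ 2 = 1 := fun j => by
    have h1 : (star U * U) j j = 1 := by rw [hUU]; simp
    have h2 : ((∑ x, ‖U x j‖ ^ 2 : ℝ) : ℂ) = 1 := by
      rw [sum_norm_sq_eq (fun x => U x j), ← h1]
      simp [Matrix.mul_apply, dotProduct, Matrix.star_apply]
    exact_mod_cast h2
  have hrep : ρ = ∑ j, ((lam j : ℝ) : ℂ) •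
      Matrix.vecMulVec (fun x => U x j) (star (fun x => U x j)) := by
    conv_lhs => rw [hherm.spectral_theorem, Unitary.conjStarAlgAut_apply]
    ext a b
    simp only [Matrix.sum_apply, Matrix.smul_apply, Matrix.vecMulVec_apply, Pi.star_apply,
      Matrix.mul_apply, Matrix.star_apply, smul_eq_mul]
    refine Finset.sum_congr rfl fun k _ => ?_
    simp only [Matrix.diagonal_apply, Function.comp_apply, mul_ite, mul_zero,
      Finset.sum_ite_eq', Finset.mem_univ, if_true]
    rw [show (RCLike.ofReal (lam k) : ℂ) = ((lam k : ℝ) : ℂ) from rfl]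
    ring
  have hsum : ∑ j, lam j = 1 := by
    rw [hrep, Matrix.trace_sum] at htr
    simp only [Matrix.trace_smul, trace_outer, hcol, smul_eq_mul] at htr
    have : ((∑ j, lam j : ℝ) : ℂ) = 1 := by
      push_cast
      simpa using htr
    exact_mod_cast this
  exact ⟨lam, fun j x => U x j, fun j => hpsd.eigenvalues_nonneg j, hsum,
    fun j => hcol j, hrep⟩

lemma tp_norm {ι : Type*} [Fintype ι] [DecidableEq ι] {m : ℕ}
    (K : Fin m → Matrix ι ι ℂ) (htp : ∑ n, (K n)ᴴ * K n = 1) (φ : ι → ℂ) :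
    ∑ n, ∑ x, ‖((K n).mulVec φ) x‖ ^ 2 = ∑ x, ‖φ x‖ ^ 2 := by
  have key : ((∑ n, ∑ x, ‖((K n).mulVec φ) x‖ ^ 2 : ℝ) : ℂ)
      = ((∑ x, ‖φ x‖ ^ 2 : ℝ) : ℂ) := by
    rw [Complex.ofReal_sum, sum_norm_sq_eq]
    calc ∑ n, ((∑ x, ‖((K n).mulVec φ) x‖ ^ 2 : ℝ) : ℂ)
        = ∑ n, dotProduct (star φ) (((K n)ᴴ * K n).mulVec φ) := by
          refine Finset.sum_congr rfl fun n _ => ?_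
          rw [sum_norm_sq_eq, Matrix.star_mulVec, ← Matrix.dotProduct_mulVec,
            Matrix.mulVec_mulVec]
      _ = dotProduct (star φ) ((∑ n, (K n)ᴴ * K n).mulVec φ) := by
          simp only [Matrix.mulVec, dotProduct, Matrix.sum_apply, Finset.mul_sum,
            Finset.sum_mul, Finset.sum_apply]
          rw [Finset.sum_comm]
          exact Finset.sum_congr rfl fun x _ => Finset.sum_comm
      _ = dotProduct (star φ) φ := by rw [htp, Matrix.one_mulVec]
  exact_mod_cast key

open Classical in
lemma incoh_col {ι : Type*} [Fintype ι] {K : Matrix ι ι ℂ}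
    (h : IsIncoherentKraus K) (j : ι) :
    (Finset.univ.filter fun x => K x j ≠ 0).card ≤ 1 := by
  rw [Finset.card_le_one]
  intro a ha b hb
  rw [Finset.mem_filter] at ha hb
  by_contra hab
  have hdiag : (Matrix.single j j (1:ℂ)).IsDiag := by
    intro x y hxy
    simp only [Matrix.single, Matrix.of_apply, ite_eq_right_iff, one_ne_zero]
    rintro ⟨rfl, rfl⟩; exact hxy rfl
  have h2 := h (Matrix.single j j (1:ℂ)) hdiag hab
  have h3 : (K * Matrix.single j j (1:ℂ) * Kᴴ) a b = K a j * star (K b j) := by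
    simp only [Matrix.mul_apply, Matrix.conjTranspose_apply, Matrix.single,
      Matrix.of_apply, mul_ite, ite_mul, mul_one, mul_zero, zero_mul,
      Finset.sum_ite_eq, Finset.mem_univ, if_true]
    have hinner : ∀ x, (∑ x1, if j = x1 ∧ j = x then K a x1 else 0)
        = if j = x then K a j else 0 := fun x => by
      by_cases hx : j = x
      · simp [hx, Finset.sum_ite_eq]
      · simp [hx]
    simp only [hinner, ite_mul, zero_mul]
    rw [Finset.sum_ite_eq]
    simp
  have h2' : (K * Matrix.single j j (1:ℂ) * Kᴴ) a b = 0 := h2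
  rw [h3] at h2'
  rcases mul_eq_zero.mp h2' with h4 | h4
  · exact ha.2 h4
  · exact hb.2 (by simpa using h4)

lemma conj_outer {ι κ : Type*} [Fintype ι] [Fintype κ] (K : Matrix ι κ ℂ) (v : κ → ℂ) :
    K * Matrix.vecMulVec v (star v) * Kᴴ
      = Matrix.vecMulVec (K.mulVec v) (star (K.mulVec v)) := by
  ext a b
  simp only [Matrix.mul_apply, Matrix.vecMulVec_apply, Matrix.conjTranspose_apply,
    Matrix.mulVec, dotProduct, Pi.star_apply, Finset.sum_mul, Finset.mul_sum,
    star_sum, star_mul']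
  refine Finset.sum_congr rfl fun x _ => Finset.sum_congr rfl fun y _ => ?_
  ring
open Kronecker in
/-- the entanglement generated from ρ^S by attaching an incoherent
ancilla |0⟩⟨0|^A and applying a bipartite incoherent operation Λ^{SA} is bounded by
the logarithmic coherence number: L_E(Λ^{SA}(ρ^S ⊗ |0⟩⟨0|^A)) ≤ L_C(ρ^S). -/
theorem entanglement_creation_bound {d : ℕ} [NeZero d]
    (ρ : Matrix (Fin d) (Fin d) ℂ) (hρ : IsDensity ρ)
    {m : ℕ} (K : Fin m → Matrix (Fin d × Fin d) (Fin d × Fin d) ℂ)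
    (hinc : ∀ n, IsIncoherentKraus (K n))
    (htp : ∑ n, (K n)ᴴ * K n = 1) :
    logSchmidtNum
        (∑ n, K n * (ρ ⊗ₖ Matrix.single (0 : Fin d) (0 : Fin d) (1 : ℂ)) * (K n)ᴴ)
      ≤ logCohNum ρ := by
  classical
  set σ : Matrix (Fin d × Fin d) (Fin d × Fin d) ℂ :=
    ∑ n, K n * (ρ ⊗ₖ Matrix.single (0 : Fin d) (0 : Fin d) (1 : ℂ)) * (K n)ᴴ with hσdef
  -- nonemptiness of the coherence set
  obtain ⟨c0, v0, hc0, hsum0, hnorm0, hrep0⟩ := density_rep ρ hρ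
  obtain ⟨n0, p0, ψ0, hdec0, _⟩ :=
    decomp_of_rep ρ c0 v0 hc0 hsum0 (fun j _ => hnorm0 j) hrep0 logCohRank
  have hSne : { x | ∃ (n : ℕ) (p : Fin n → ℝ) (ψ : Fin n → Fin d → ℂ),
      IsDecomp ρ p ψ ∧ x = ∑ i, p i * logCohRank (ψ i) }.Nonempty :=
    ⟨_, n0, p0, ψ0, hdec0, rfl⟩
  -- the Schmidt set is bounded below by 0
  have hTbdd : BddBelow { x | ∃ (n : ℕ) (p : Fin n → ℝ)
      (ψ : Fin n → (Fin d × Fin d) → ℂ),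
      IsDecomp σ p ψ ∧ x = ∑ i, p i * logSchmidtRank (ψ i) } := by
    refine ⟨0, ?_⟩
    rintro x ⟨n, p, ψ, ⟨hp, _, hψ, _⟩, rfl⟩
    refine Finset.sum_nonneg fun i _ => mul_nonneg (le_of_lt (hp i)) ?_
    refine Real.logb_nonneg one_lt_two ?_
    have hne : (Matrix.of fun a b => ψ i (a, b)) ≠ 0 := by
      obtain ⟨⟨a, b⟩, hab⟩ := exists_ne_zero_of_unit (hψ i)
      intro h0
      exact hab (by simpa using congrFun (congrFun h0 a) b)
    exact_mod_cast Nat.one_le_cast.mpr (rank_pos_of_ne_zero hne)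
  rw [logSchmidtNum, logCohNum]
  refine le_csInf hSne ?_
  rintro x ⟨n, p, ψ, ⟨hp, hp1, hψn, hrep⟩, rfl⟩
  -- construct the vectors
  set e0vec : Fin d → ℂ := fun b => if b = 0 then 1 else 0 with he0
  set φ : Fin n → (Fin d × Fin d) → ℂ := fun i a => ψ i a.1 * e0vec a.2 with hφ
  have hφnorm : ∀ i, ∑ x, ‖φ i x‖ ^ 2 = 1 := by
    intro i
    have hterm : ∀ a b, ‖φ i (a, b)‖ ^ 2
        = ‖ψ i a‖ ^ 2 * (if b = (0 : Fin d) then 1 else 0) := fun a b => by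
      by_cases hb : b = 0 <;> simp [hφ, he0, hb]
    rw [Fintype.sum_prod_type]
    simp only [hterm, mul_ite, mul_one, mul_zero, Finset.sum_ite_eq',
      Finset.mem_univ, if_true]
    exact hψn i
  have hkron : ρ ⊗ₖ Matrix.single (0 : Fin d) (0 : Fin d) (1 : ℂ)
      = ∑ i, (p i : ℂ) • Matrix.vecMulVec (φ i) (star (φ i)) := by
    rw [hrep]
    ext ⟨a, b⟩ ⟨c, e⟩
    simp only [Matrix.kroneckerMap_apply, Matrix.sum_apply, Matrix.smul_apply,
      Matrix.vecMulVec_apply, Pi.star_apply, Matrix.single, Matrix.of_apply,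
      smul_eq_mul, Finset.sum_mul]
    refine Finset.sum_congr rfl fun i _ => ?_
    by_cases hb : (0 : Fin d) = b
    · by_cases he' : (0 : Fin d) = e
      · subst hb; subst he'
        simp only [hφ, he0, and_self, if_true, mul_one, star_mul']
        try ring
      · have he2 : e ≠ 0 := fun h => he' h.symm
        simp [hφ, he0, he', he2]
    · have hb2 : b ≠ 0 := fun h => hb h.symm
      simp [hφ, he0, hb, hb2]
  set w : Fin n → Fin m → (Fin d × Fin d) → ℂ := fun i nn => (K nn).mulVec (φ i) with hw
  set q : Fin n → Fin m → ℝ := fun i nn => ∑ x, ‖w i nn x‖ ^ 2 with hq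
  have hq0 : ∀ i nn, 0 ≤ q i nn := fun i nn =>
    Finset.sum_nonneg fun x _ => sq_nonneg _
  have hqsum : ∀ i, ∑ nn, q i nn = 1 := fun i => by
    rw [hq]
    simpa using (tp_norm K htp (φ i)).trans (hφnorm i)
  have hw0 : ∀ i nn, q i nn = 0 → w i nn = 0 := fun i nn h => by
    funext x
    have := (Finset.sum_eq_zero_iff_of_nonneg (fun y _ => sq_nonneg ‖w i nn y‖)).mp h x
      (Finset.mem_univ x)
    simpa [pow_eq_zero_iff] using this
  set c : Fin n × Fin m → ℝ := fun j => p j.1 * q j.1 j.2 with hcdef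
  set v : Fin n × Fin m → (Fin d × Fin d) → ℂ :=
    fun j x => ((Real.sqrt (q j.1 j.2))⁻¹ : ℝ) * w j.1 j.2 x with hvdef
  have hcnn : ∀ j, 0 ≤ c j := fun j => mul_nonneg (le_of_lt (hp j.1)) (hq0 j.1 j.2)
  have hcsum : ∑ j, c j = 1 := by
    rw [Fintype.sum_prod_type]
    calc ∑ i, ∑ nn, p i * q i nn = ∑ i, p i * ∑ nn, q i nn := by
          exact Finset.sum_congr rfl fun i _ => (Finset.mul_sum _ _ _).symm
      _ = ∑ i, p i := by
          exact Finset.sum_congr rfl fun i _ => by rw [hqsum i, mul_one]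
      _ = 1 := hp1
  have hvnorm : ∀ j : Fin n × Fin m, c j ≠ 0 → ∑ x, ‖v j x‖ ^ 2 = 1 := by
    rintro ⟨i, nn⟩ hcne
    have hqne : q i nn ≠ 0 := fun h => hcne (by simp [hcdef, h])
    have hterm : ∀ x, ‖v (i, nn) x‖ ^ 2
        = ((Real.sqrt (q i nn))⁻¹) ^ 2 * ‖w i nn x‖ ^ 2 := fun x => by
      rw [hvdef]
      simp only [norm_mul, Complex.norm_real, mul_pow, Real.norm_eq_abs, sq_abs]
    rw [Finset.sum_congr rfl fun x _ => hterm x, ← Finset.mul_sum]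
    show ((Real.sqrt (q i nn))⁻¹) ^ 2 * q i nn = 1
    rw [inv_pow, Real.sq_sqrt (hq0 i nn), inv_mul_cancel₀ hqne]
  have hσrep : σ = ∑ j : Fin n × Fin m,
      (c j : ℂ) • Matrix.vecMulVec (v j) (star (v j)) := by
    rw [hσdef, Fintype.sum_prod_type]
    have hterm : ∀ nn, K nn * (ρ ⊗ₖ Matrix.single (0 : Fin d) (0 : Fin d) (1 : ℂ))
        * (K nn)ᴴ = ∑ i, (p i : ℂ) • Matrix.vecMulVec (w i nn) (star (w i nn)) := by
      intro nn
      rw [hkron, Finset.mul_sum, Finset.sum_mul]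
      refine Finset.sum_congr rfl fun i _ => ?_
      rw [Matrix.mul_smul, Matrix.smul_mul, conj_outer]
    rw [Finset.sum_congr rfl fun nn _ => hterm nn, Finset.sum_comm]
    refine Finset.sum_congr rfl fun i _ => Finset.sum_congr rfl fun nn _ => ?_
    by_cases hqz : q i nn = 0
    · have hwz := hw0 i nn hqz
      ext x y
      simp [hvdef, hwz, Matrix.vecMulVec_apply]
    · have hr : p i * q i nn * ((Real.sqrt (q i nn))⁻¹ * (Real.sqrt (q i nn))⁻¹)
          = p i := by
        rw [← mul_inv, Real.mul_self_sqrt (hq0 i nn), mul_assoc,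
          mul_inv_cancel₀ hqz, mul_one]
      ext x y
      symm
      simp only [Matrix.smul_apply, Matrix.vecMulVec_apply, Pi.star_apply, smul_eq_mul,
        hvdef, hcdef, Complex.star_def, map_mul, Complex.conj_ofReal]
      calc (↑(p i * q i nn) : ℂ) * ((↑(Real.sqrt (q i nn))⁻¹ * w i nn x)
              * (↑(Real.sqrt (q i nn))⁻¹ * (starRingEnd ℂ) (w i nn y)))
          = ↑(p i * q i nn * ((Real.sqrt (q i nn))⁻¹ * (Real.sqrt (q i nn))⁻¹))
              * (w i nn x * (starRingEnd ℂ) (w i nn y)) := by push_cast; ring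
        _ = ↑(p i) * (w i nn x * (starRingEnd ℂ) (w i nn y)) := by rw [hr]
  -- the Schmidt rank bound
  have hrank : ∀ (i : Fin n) (nn : Fin m), q i nn ≠ 0 →
      logSchmidtRank (v (i, nn)) ≤ logCohRank (ψ i) := by
    intro i nn hqz
    have hcne : c (i, nn) ≠ 0 := by
      simp only [hcdef]
      exact mul_ne_zero (ne_of_gt (hp i)) hqz
    -- support set
    set S : Finset (Fin d) := (Finset.univ.filter fun a => ψ i a ≠ 0).biUnion
      (fun a => (Finset.univ.filter
        fun x : Fin d × Fin d => K nn x (a, 0) ≠ 0).image Prod.fst) with hS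
    have hScard : S.card ≤ cohRank (ψ i) := by
      refine (Finset.card_biUnion_le).trans ?_
      have hb1 : ∀ a ∈ Finset.univ.filter fun a => ψ i a ≠ 0,
          ((Finset.univ.filter fun x : Fin d × Fin d => K nn x (a, 0) ≠ 0).image
            Prod.fst).card ≤ 1 := fun a _ =>
        Finset.card_image_le.trans (by
          have h := incoh_col (hinc nn) (a, 0)
          convert h using 2)
      calc ∑ a ∈ Finset.univ.filter fun a => ψ i a ≠ 0,
            ((Finset.univ.filter fun x : Fin d × Fin d => K nn x (a, 0) ≠ 0).image
              Prod.fst).card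
          ≤ ∑ _a ∈ Finset.univ.filter fun a => ψ i a ≠ 0, 1 :=
            Finset.sum_le_sum hb1
        _ = (Finset.univ.filter fun a => ψ i a ≠ 0).card := by simp
        _ = cohRank (ψ i) := by rw [cohRank]
    have hsupp : ∀ r ∉ S, ∀ b, (Matrix.of fun a b => v (i, nn) (a, b)) r b = 0 := by
      intro r hr b
      simp only [Matrix.of_apply]
      by_contra hvne
      have hwne : w i nn (r, b) ≠ 0 := by
        intro hwz
        exact hvne (by simp [hvdef, hwz])
      have hex : ∃ a, ψ i a ≠ 0 ∧ K nn (r, b) (a, 0) ≠ 0 := by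
        by_contra hno
        push_neg at hno
        apply hwne
        rw [hw]
        simp only [Matrix.mulVec, dotProduct]
        refine Finset.sum_eq_zero fun z _ => ?_
        rcases z with ⟨a, bb⟩
        by_cases hbb : bb = 0
        · subst hbb
          by_cases hpsi : ψ i a = 0
          · simp [hφ, hpsi]
          · rw [hno a hpsi]; ring
        · simp [hφ, he0, hbb]
      obtain ⟨a, hpsia, hKa⟩ := hex
      refine hr ?_
      rw [hS]
      refine Finset.mem_biUnion.mpr ⟨a, Finset.mem_filter.mpr ⟨Finset.mem_univ _, hpsia⟩, ?_⟩
      exact Finset.mem_image.mpr ⟨(r, b), Finset.mem_filter.mpr ⟨Finset.mem_univ _, hKa⟩, rfl⟩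
    have hrle : (Matrix.of fun a b => v (i, nn) (a, b)).rank ≤ cohRank (ψ i) :=
      (rank_le_card_of_support _ S hsupp).trans hScard
    have hrpos : 1 ≤ (Matrix.of fun a b => v (i, nn) (a, b)).rank := by
      refine rank_pos_of_ne_zero ?_
      obtain ⟨⟨a, b⟩, hab⟩ := exists_ne_zero_of_unit (hvnorm (i, nn) hcne)
      intro h0
      exact hab (by simpa using congrFun (congrFun h0 a) b)
    rw [logSchmidtRank, logCohRank]
    refine Real.logb_le_logb_of_le one_lt_two ?_ ?_
    · have : (1 : ℝ) ≤ ((Matrix.of fun a b => v (i, nn) (a, b)).rank : ℝ) :=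
        Nat.one_le_cast.mpr hrpos
      linarith
    · exact_mod_cast hrle
  -- build a decomposition of σ and conclude
  obtain ⟨N, P, Ψ, hdec, hval⟩ :=
    decomp_of_rep σ c v hcnn hcsum hvnorm hσrep logSchmidtRank
  refine (csInf_le hTbdd ⟨N, P, Ψ, hdec, rfl⟩).trans ?_
  rw [hval, Fintype.sum_prod_type]
  refine Finset.sum_le_sum fun i _ => ?_
  calc ∑ nn, c (i, nn) * logSchmidtRank (v (i, nn))
      ≤ ∑ nn, (p i * q i nn) * logCohRank (ψ i) := by
        refine Finset.sum_le_sum fun nn _ => ?_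
        by_cases hqz : q i nn = 0
        · simp [hcdef, hqz]
        · exact mul_le_mul_of_nonneg_left (hrank i nn hqz) (hcnn (i, nn))
    _ = p i * logCohRank (ψ i) := by
        rw [← Finset.sum_mul, ← Finset.mul_sum, hqsum i, mul_one]
end

section
/- There exists an isometry W : ℂ^d → ℂ^d⊗ℂ^d (namely W = U(I⊗|0⟩⟨0|) restricted accordingly, with U the generalized CNOT unitary, so that W|i⟩ = |i⟩⊗|i⟩ for every fixed-basis state |i⟩) such that for every density matrix ρ on ℂ^d, the logarithmic coherence number of ρ equals the logarithmic Schmidt number of WρW†: L_C(ρ) = L_E(WρW†). -/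
open scoped BigOperators ComplexOrder Matrix

open Classical in
/-- Schmidt rank of a diagonally supported vector is its coherence rank. -/
lemma logSchmidtRank_diag_aux {d : ℕ} (v : Fin d → ℂ) (φ : Fin d × Fin d → ℂ)
    (h : ∀ a b, φ (a, b) = if a = b then v a else 0) :
    logSchmidtRank φ = logCohRank v := by
  have hm : (Matrix.of fun a b => φ (a, b)) = Matrix.diagonal v := by
    ext a b; simp [h, Matrix.diagonal_apply]
  rw [logSchmidtRank, logCohRank, cohRank, hm, Matrix.rank_diagonal]
  congr 2
  simp [Fintype.card_subtype]

/-- there is an isometry W : ℂ^d → ℂ^d ⊗ ℂ^d with W|i⟩ = |i⟩⊗|i⟩ such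
that L_C(ρ) = L_E(WρW†) for every density matrix ρ. -/
theorem exists_isometry_coherence_eq_entanglement (d : ℕ) :
    ∃ W : Matrix (Fin d × Fin d) (Fin d) ℂ,
      Wᴴ * W = 1 ∧
      (∀ i : Fin d, W.mulVec (Pi.single i 1)
          = fun x : Fin d × Fin d => if x = (i, i) then 1 else 0) ∧
      ∀ ρ : Matrix (Fin d) (Fin d) ℂ, IsDensity ρ →
        logCohNum ρ = logSchmidtNum (W * ρ * Wᴴ) := by
  classical
  set W : Matrix (Fin d × Fin d) (Fin d) ℂ :=
    Matrix.of fun x i => if x = (i, i) then 1 else 0 with hW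
  have hσ : ∀ (ρ : Matrix (Fin d) (Fin d) ℂ) (a b c e : Fin d),
      (W * ρ * Wᴴ) (a, b) (c, e) = if a = b ∧ c = e then ρ a c else 0 := by
    intro ρ a b c e
    have hWρ : ∀ j, (W * ρ) (a, b) j = if a = b then ρ a j else 0 := by
      intro j
      simp only [Matrix.mul_apply, Matrix.of_apply, W, ite_mul, one_mul, zero_mul]
      rw [Finset.sum_eq_single a]
      · by_cases h : a = b <;> simp [h, Prod.ext_iff, eq_comm]
      · intro i _ hi
        simp only [Prod.mk.injEq, ite_eq_right_iff, and_imp]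
        intro h1 _; exact absurd h1.symm hi
      · simp
    simp only [Matrix.mul_apply, Matrix.conjTranspose_apply, hWρ, Matrix.of_apply, W,
      apply_ite star, star_one, star_zero, mul_ite, mul_one, mul_zero]
    rw [Finset.sum_eq_single c]
    · by_cases h1 : a = b <;> by_cases h2 : c = e <;> simp [h1, h2, Prod.ext_iff, eq_comm]
    · intro j _ hj
      simp only [Prod.mk.injEq, ite_eq_right_iff, and_imp]
      intro h1 _; exact absurd h1.symm hj
    · simp
  refine ⟨W, ?_, ?_, ?_⟩
  · ext i j
    simp only [Matrix.mul_apply, Matrix.conjTranspose_apply, Matrix.of_apply, W,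
      Matrix.one_apply, apply_ite star, star_one, star_zero]
    rw [Finset.sum_eq_single (i, i)]
    · by_cases h : i = j <;> simp [h, Prod.ext_iff]
    · intro b _ hb; simp [hb]
    · simp
  · intro i
    funext x
    simp [Matrix.mulVec, dotProduct, W, Pi.single_apply, mul_ite,
      Finset.sum_ite_eq']
  · intro ρ _
    rw [logCohNum, logSchmidtNum]
    congr 1
    ext x
    constructor
    · rintro ⟨n, p, ψ, ⟨hp, hs, hn, hd⟩, rfl⟩
      refine ⟨n, p, fun i y => if y.1 = y.2 then ψ i y.1 else 0, ⟨hp, hs, ?_, ?_⟩, ?_⟩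
      · intro i
        rw [← hn i, Fintype.sum_prod_type]
        apply Finset.sum_congr rfl
        intro a _
        rw [Finset.sum_eq_single a]
        · simp
        · intro b _ hb; simp [Ne.symm hb]
        · simp
      · ext ⟨a, b⟩ ⟨c, e⟩
        rw [hσ]
        have hρ : ρ a c
            = ∑ i, (p i : ℂ) * (ψ i a * star (ψ i c)) := by
          rw [hd]
          simp [Matrix.sum_apply, Matrix.vecMulVec_apply, Complex.star_def]
        simp only [Matrix.sum_apply, Matrix.smul_apply, Matrix.vecMulVec_apply,
          Pi.star_apply, smul_eq_mul]
        by_cases h1 : a = b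
        · subst h1
          by_cases h2 : c = e
          · subst h2
            simpa [Complex.star_def] using hρ
          · simp [h2]
        · simp [h1]
      · apply Finset.sum_congr rfl
        intro i _
        congr 1
        exact (logSchmidtRank_diag_aux (ψ i) _ (fun a b => rfl)).symm
    · rintro ⟨n, p, φ, ⟨hp, hs, hn, hd⟩, rfl⟩
      have hsupp : ∀ i a b, a ≠ b → φ i (a, b) = 0 := by
        intro i a b hab
        have h0 : (∑ j, (p j : ℂ) • Matrix.vecMulVec (φ j) (star (φ j))) (a, b) (a, b)
            = 0 := by
          rw [← hd, hσ]
          simp [hab]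
        simp only [Matrix.sum_apply, Matrix.smul_apply, Matrix.vecMulVec_apply,
          Pi.star_apply, smul_eq_mul] at h0
        have h1 : ∑ j, p j * Complex.normSq (φ j (a, b)) = 0 := by
          have hcast : ((∑ j, p j * Complex.normSq (φ j (a, b)) : ℝ) : ℂ) = 0 := by
            push_cast
            rw [← h0]
            apply Finset.sum_congr rfl
            intro j _
            congr 1
            rw [Complex.star_def, Complex.mul_conj]
          exact_mod_cast hcast
        have h2 := (Finset.sum_eq_zero_iff_of_nonneg
          (fun j _ => mul_nonneg (hp j).le (Complex.normSq_nonneg _))).mp h1 i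
          (Finset.mem_univ i)
        have h3 : Complex.normSq (φ i (a, b)) = 0 := by
          rcases mul_eq_zero.mp h2 with h | h
          · exact absurd h (hp i).ne'
          · exact h
        exact Complex.normSq_eq_zero.mp h3
      refine ⟨n, p, fun i a => φ i (a, a), ⟨hp, hs, ?_, ?_⟩, ?_⟩
      · intro i
        rw [← hn i, Fintype.sum_prod_type]
        apply Finset.sum_congr rfl
        intro a _
        rw [Finset.sum_eq_single a]
        · intro b _ hb
          rw [hsupp i a b (Ne.symm hb)]
          simp
        · simp
      · ext a c
        have h0 : (W * ρ * Wᴴ) (a, a) (c, c)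
            = (∑ j, (p j : ℂ) • Matrix.vecMulVec (φ j) (star (φ j))) (a, a) (c, c) := by
          rw [hd]
        rw [hσ] at h0
        simp only [and_self, if_true] at h0
        rw [h0]
        simp [Matrix.sum_apply, Matrix.vecMulVec_apply]
      · apply Finset.sum_congr rfl
        intro i _
        congr 1
        refine (logSchmidtRank_diag_aux _ (φ i) ?_)
        intro a b
        by_cases h : a = b
        · subst h; simp
        · simp [h, hsupp i a b h]
end
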